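/- Let a, b, z be real numbers with z ≥ 0, and suppose the 2×2 matrix C = [[a, z],[0, b]] can be written as C = A·B where A and B are positive semidefinite 2×2 complex matrices with operator norms ‖A‖ ≤ 1 and ‖B‖ ≤ 1. Then a, b ∈ [0,1] and z ≤ |√a − √b|·√((1−a)(1−b)). -/

import Mathlib

set_option maxHeartbeats 1000000

open scoped ComplexOrder
open Complex Matrix


lemma cs2 {u1 u2 v1 v2 : ℝ} (hu1 : 0 ≤ u1) (hu2 : 0 ≤ u2) (hv1 : 0 ≤ v1) (hv2 : 0 ≤ v2) :
    u1 * v1 + u2 * v2 ≤ Real.sqrt (u1 ^ 2 + u2 ^ 2) * Real.sqrt (v1 ^ 2 + v2 ^ 2) := by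
  have h : (u1 * v1 + u2 * v2) ^ 2 ≤ (u1 ^ 2 + u2 ^ 2) * (v1 ^ 2 + v2 ^ 2) := by
    nlinarith [sq_nonneg (u1 * v2 - u2 * v1)]
  calc u1 * v1 + u2 * v2 = Real.sqrt ((u1 * v1 + u2 * v2) ^ 2) :=
        (Real.sqrt_sq (by positivity)).symm
    _ ≤ Real.sqrt ((u1 ^ 2 + u2 ^ 2) * (v1 ^ 2 + v2 ^ 2)) := Real.sqrt_le_sqrt h
    _ = _ := Real.sqrt_mul (by positivity) _

lemma real_key_aux {q r x y g z : ℝ} (hq0 : 0 ≤ q) (hq1 : q ≤ 1)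
    (hr0 : 0 ≤ r) (hr1 : r ≤ 1) (hx0 : 0 ≤ x) (hx1 : x ≤ 1) (hy0 : 0 ≤ y) (hy1 : y ≤ 1)
    (hg : 0 ≤ g)
    (h3' : q * g ^ 2 ≤ (1 - q) * (1 - x)) (h4' : r * g ^ 2 ≤ (1 - r) * (1 - y))
    (hz0 : 0 ≤ z) (hz : z ≤ g * |r * x - q * y|) :
    z ≤ |Real.sqrt (r * x) - Real.sqrt (q * y)| * Real.sqrt ((1 - r * x) * (1 - q * y)) := by
  have ha0 : 0 ≤ r * x := mul_nonneg hr0 hx0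
  have hb0 : 0 ≤ q * y := mul_nonneg hq0 hy0
  have hr1' : (0:ℝ) ≤ 1 - r := by linarith
  have hq1' : (0:ℝ) ≤ 1 - q := by linarith
  have hx1' : (0:ℝ) ≤ 1 - x := by linarith
  have hy1' : (0:ℝ) ≤ 1 - y := by linarith
  have hxr : 0 ≤ x * (1 - r) := mul_nonneg hx0 hr1'
  have hyq : 0 ≤ y * (1 - q) := mul_nonneg hy0 hq1'
  have sA : g * Real.sqrt (r * x) ≤ Real.sqrt (x * (1 - r)) * Real.sqrt (1 - y) := by
    rw [← Real.sqrt_sq hg, ← Real.sqrt_mul (sq_nonneg g), ← Real.sqrt_mul hxr]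
    apply Real.sqrt_le_sqrt
    nlinarith [mul_le_mul_of_nonneg_right h4' hx0]
  have sB : g * Real.sqrt (q * y) ≤ Real.sqrt (1 - x) * Real.sqrt (y * (1 - q)) := by
    rw [← Real.sqrt_sq hg, ← Real.sqrt_mul (sq_nonneg g), ← Real.sqrt_mul hx1']
    apply Real.sqrt_le_sqrt
    nlinarith [mul_le_mul_of_nonneg_right h3' hy0]
  have sC : Real.sqrt (x * (1 - r)) * Real.sqrt (1 - y)
      + Real.sqrt (1 - x) * Real.sqrt (y * (1 - q))
      ≤ Real.sqrt (1 - r * x) * Real.sqrt (1 - q * y) := by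
    have hcs := cs2 (Real.sqrt_nonneg (x * (1 - r))) (Real.sqrt_nonneg (1 - x))
      (Real.sqrt_nonneg (1 - y)) (Real.sqrt_nonneg (y * (1 - q)))
    rw [Real.sq_sqrt hxr, Real.sq_sqrt hx1', Real.sq_sqrt hy1', Real.sq_sqrt hyq] at hcs
    have e1 : x * (1 - r) + (1 - x) = 1 - r * x := by ring
    have e2 : 1 - y + y * (1 - q) = 1 - q * y := by ring
    rw [e1, e2] at hcs
    exact hcs
  have key : g * (Real.sqrt (r * x) + Real.sqrt (q * y))
      ≤ Real.sqrt ((1 - r * x) * (1 - q * y)) := by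
    rw [Real.sqrt_mul (by nlinarith : (0:ℝ) ≤ 1 - r * x)]
    calc g * (Real.sqrt (r * x) + Real.sqrt (q * y))
        = g * Real.sqrt (r * x) + g * Real.sqrt (q * y) := by ring
      _ ≤ _ := by linarith
  have habs : |r * x - q * y| = |Real.sqrt (r * x) - Real.sqrt (q * y)|
      * (Real.sqrt (r * x) + Real.sqrt (q * y)) := by
    have e1 := Real.sq_sqrt ha0
    have e2 := Real.sq_sqrt hb0
    have e : r * x - q * y = (Real.sqrt (r * x) - Real.sqrt (q * y))
        * (Real.sqrt (r * x) + Real.sqrt (q * y)) := by nlinarith [e1, e2]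
    rw [e, abs_mul, _root_.abs_of_nonneg (by positivity : (0:ℝ) ≤ Real.sqrt (r * x) + Real.sqrt (q * y))]
  calc z ≤ g * |r * x - q * y| := hz
    _ = |Real.sqrt (r * x) - Real.sqrt (q * y)|
        * (g * (Real.sqrt (r * x) + Real.sqrt (q * y))) := by rw [habs]; ring
    _ ≤ |Real.sqrt (r * x) - Real.sqrt (q * y)| * Real.sqrt ((1 - r * x) * (1 - q * y)) :=
        mul_le_mul_of_nonneg_left key (abs_nonneg _)

lemma real_key {p q r s g z : ℝ} (hp0 : 0 ≤ p) (hp1 : p ≤ 1) (hq0 : 0 ≤ q) (hq1 : q ≤ 1)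
    (hr0 : 0 ≤ r) (hr1 : r ≤ 1) (hs0 : 0 ≤ s) (hs1 : s ≤ 1) (hg : 0 ≤ g)
    (h1 : q * g ^ 2 ≤ p) (h2 : r * g ^ 2 ≤ s)
    (h3 : q ^ 2 * g ^ 2 ≤ (1 - p) * (1 - q)) (h4 : r ^ 2 * g ^ 2 ≤ (1 - r) * (1 - s))
    (hz0 : 0 ≤ z) (hz : z ≤ g * |p * r - q * s|) :
    (0 ≤ p * r - q * r * g ^ 2 ∧ p * r - q * r * g ^ 2 ≤ 1) ∧
    (0 ≤ q * s - q * r * g ^ 2 ∧ q * s - q * r * g ^ 2 ≤ 1) ∧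
      z ≤ |Real.sqrt (p * r - q * r * g ^ 2) - Real.sqrt (q * s - q * r * g ^ 2)| *
        Real.sqrt ((1 - (p * r - q * r * g ^ 2)) * (1 - (q * s - q * r * g ^ 2))) := by
  have hg2 : 0 ≤ g ^ 2 := sq_nonneg g
  have hqg : 0 ≤ q * g ^ 2 := mul_nonneg hq0 hg2
  have hrg : 0 ≤ r * g ^ 2 := mul_nonneg hr0 hg2
  have hx0 : 0 ≤ p - q * g ^ 2 := by linarith
  have hx1 : p - q * g ^ 2 ≤ 1 := by linarith
  have hy0 : 0 ≤ s - r * g ^ 2 := by linarith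
  have hy1 : s - r * g ^ 2 ≤ 1 := by linarith
  have hae : p * r - q * r * g ^ 2 = r * (p - q * g ^ 2) := by ring
  have hbe : q * s - q * r * g ^ 2 = q * (s - r * g ^ 2) := by ring
  rw [hae, hbe]
  have ha0 : 0 ≤ r * (p - q * g ^ 2) := mul_nonneg hr0 hx0
  have hb0 : 0 ≤ q * (s - r * g ^ 2) := mul_nonneg hq0 hy0
  have ha1 : r * (p - q * g ^ 2) ≤ 1 := by nlinarith
  have hb1 : q * (s - r * g ^ 2) ≤ 1 := by nlinarith
  refine ⟨⟨ha0, ha1⟩, ⟨hb0, hb1⟩, ?_⟩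
  have h3' : q * g ^ 2 ≤ (1 - q) * (1 - (p - q * g ^ 2)) := by nlinarith
  have h4' : r * g ^ 2 ≤ (1 - r) * (1 - (s - r * g ^ 2)) := by nlinarith
  have hz' : z ≤ g * |r * (p - q * g ^ 2) - q * (s - r * g ^ 2)| := by
    have e : p * r - q * s = r * (p - q * g ^ 2) - q * (s - r * g ^ 2) := by ring
    rwa [e] at hz
  exact real_key_aux hq0 hq1 hr0 hr1 hx0 hx1 hy0 hy1 hg h3' h4' hz0 hz'


lemma reduce {p q r s w1 w2 v1 v2 a b z : ℝ}
    (hp0 : 0 ≤ p) (hq0 : 0 ≤ q) (hr0 : 0 ≤ r) (hs0 : 0 ≤ s)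
    (hp1 : p ≤ 1) (hq1 : q ≤ 1) (hr1 : r ≤ 1) (hs1 : s ≤ 1)
    (hmA : w1 ^ 2 + w2 ^ 2 ≤ p * q) (hmA' : w1 ^ 2 + w2 ^ 2 ≤ (1 - p) * (1 - q))
    (hmB : v1 ^ 2 + v2 ^ 2 ≤ r * s) (hmB' : v1 ^ 2 + v2 ^ 2 ≤ (1 - r) * (1 - s))
    (e00 : p * r + (w1 * v1 + w2 * v2) = a)
    (e01r : p * v1 + w1 * s = z)
    (e10r : w1 * r + q * v1 = 0) (e10i : w2 * r + q * v2 = 0)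
    (e11 : w1 * v1 + w2 * v2 + q * s = b)
    (hz0 : 0 ≤ z) :
    ∃ g : ℝ, 0 ≤ g ∧ q * g ^ 2 ≤ p ∧ r * g ^ 2 ≤ s ∧ q ^ 2 * g ^ 2 ≤ (1 - p) * (1 - q) ∧
      r ^ 2 * g ^ 2 ≤ (1 - r) * (1 - s) ∧ a = p * r - q * r * g ^ 2 ∧
      b = q * s - q * r * g ^ 2 ∧ z ≤ g * |p * r - q * s| := by
  by_cases hq : q = 0
  · -- q = 0 : then w = 0
    have hw1 : w1 = 0 := by nlinarith [sq_nonneg w1, sq_nonneg w2]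
    have hw2 : w2 = 0 := by nlinarith [sq_nonneg w1, sq_nonneg w2]
    subst hq hw1 hw2
    by_cases hr : r = 0
    · have hv1 : v1 = 0 := by nlinarith [sq_nonneg v1, sq_nonneg v2]
      have hv2 : v2 = 0 := by nlinarith [sq_nonneg v1, sq_nonneg v2]
      refine ⟨0, le_refl 0, by simpa using hp0, by simpa using hs0,
        by simpa using (by linarith : (0:ℝ) ≤ 1 - p),
        by simpa using mul_nonneg (by linarith : (0:ℝ) ≤ 1 - r) (by linarith : (0:ℝ) ≤ 1 - s),
        ?_, ?_, ?_⟩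
      · rw [← e00]; subst hr hv1 hv2; ring
      · rw [← e11]; ring
      · subst hv1; simp at e01r; rw [← e01r]; positivity
    · have hrpos : 0 < r := lt_of_le_of_ne hr0 (Ne.symm hr)
      obtain ⟨n, hn⟩ : ∃ n, n = v1 ^ 2 + v2 ^ 2 := ⟨_, rfl⟩
      rw [← hn] at hmB hmB'
      have hn0 : 0 ≤ n := by rw [hn]; positivity
      obtain ⟨G, hG⟩ : ∃ G, G = Real.sqrt n := ⟨_, rfl⟩
      have hG0 : 0 ≤ G := by rw [hG]; positivity
      have hG2 : G ^ 2 = n := by rw [hG, Real.sq_sqrt hn0]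
      refine ⟨G / r, by positivity, by simpa using hp0, ?_, ?_, ?_, ?_, ?_, ?_⟩
      · have e : r * (G / r) ^ 2 = n / r := by
          rw [div_pow, hG2]; field_simp
        rw [e, div_le_iff₀ hrpos]; nlinarith
      · simpa using (by linarith : (0:ℝ) ≤ 1 - p)
      · have e : r ^ 2 * (G / r) ^ 2 = n := by
          rw [div_pow, hG2]; field_simp
        rw [e]; exact hmB'
      · rw [← e00]; ring
      · rw [← e11]; ring
      · have hv1le : |v1| ≤ G := by
          rw [hG, ← Real.sqrt_sq_eq_abs]
          exact Real.sqrt_le_sqrt (by nlinarith [sq_nonneg v2])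
        have hzz : z = p * v1 := by rw [← e01r]; ring
        have habs : |p * r - 0 * s| = p * r := by
          rw [_root_.abs_of_nonneg (by simpa using mul_nonneg hp0 hr0 : (0:ℝ) ≤ p * r - 0 * s)]; ring
        rw [habs, hzz]
        calc p * v1 ≤ p * |v1| := by nlinarith [le_abs_self v1]
          _ ≤ p * G := by nlinarith [abs_nonneg v1]
          _ = G / r * (p * r) := by field_simp
  · have hqpos : 0 < q := lt_of_le_of_ne hq0 (Ne.symm hq)
    obtain ⟨m, hm⟩ : ∃ m, m = w1 ^ 2 + w2 ^ 2 := ⟨_, rfl⟩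
    rw [← hm] at hmA hmA'
    have hm0 : 0 ≤ m := by rw [hm]; positivity
    obtain ⟨G, hG⟩ : ∃ G, G = Real.sqrt m := ⟨_, rfl⟩
    have hG0 : 0 ≤ G := by rw [hG]; positivity
    have hG2 : G ^ 2 = m := by rw [hG, Real.sq_sqrt hm0]
    have hqg : q ^ 2 * (G / q) ^ 2 = m := by
      rw [div_pow, hG2]; field_simp
    have h1 : q * v1 = -(w1 * r) := by linarith
    have h2 : q * v2 = -(w2 * r) := by linarith
    have hqn : q ^ 2 * (v1 ^ 2 + v2 ^ 2) = r ^ 2 * m := by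
      rw [hm]; linear_combination (q * v1 - w1 * r) * h1 + (q * v2 - w2 * r) * h2
    have ht : q * (w1 * v1 + w2 * v2) = -(r * m) := by
      rw [hm]; linear_combination w1 * h1 + w2 * h2
    refine ⟨G / q, by positivity, ?_, ?_, ?_, ?_, ?_, ?_, ?_⟩
    · nlinarith [hqg, hmA, hqpos]
    · rcases hr0.eq_or_lt with h | hrpos
      · rw [← h]; simpa using hs0
      · have h5 : r ^ 2 * m ≤ q ^ 2 * (r * s) := by
          rw [← hqn]; exact mul_le_mul_of_nonneg_left hmB (sq_nonneg q)
        have key : r * m ≤ s * q ^ 2 := by nlinarith [h5, hrpos]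
        have e : r * (G / q) ^ 2 = r * m / q ^ 2 := by
          rw [div_pow, hG2]; ring
        rw [e, div_le_iff₀ (by positivity : (0:ℝ) < q ^ 2)]; linarith
    · rw [hqg]; exact hmA'
    · have hcan : q ^ 2 * (r ^ 2 * (G / q) ^ 2) = q ^ 2 * (v1 ^ 2 + v2 ^ 2) := by
        linear_combination r ^ 2 * hqg - hqn
      have e : r ^ 2 * (G / q) ^ 2 = v1 ^ 2 + v2 ^ 2 :=
        mul_left_cancel₀ (pow_ne_zero 2 hq) hcan
      rw [e]; exact hmB'
    · have hcan : q * a = q * (p * r - q * r * (G / q) ^ 2) := by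
        rw [← e00]; linear_combination ht + r * hqg
      exact mul_left_cancel₀ hq hcan
    · have hcan : q * b = q * (q * s - q * r * (G / q) ^ 2) := by
        rw [← e11]; linear_combination ht + r * hqg
      exact mul_left_cancel₀ hq hcan
    · have hqz : q * z = w1 * (q * s - p * r) := by
        rw [← e01r]; nlinarith [h1]
      have hw1le : |w1| ≤ G := by
        rw [hG, ← Real.sqrt_sq_eq_abs]
        exact Real.sqrt_le_sqrt (by nlinarith [sq_nonneg w2])
      have step : q * z ≤ G * |p * r - q * s| := by
        calc q * z = w1 * (q * s - p * r) := hqz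
          _ ≤ |w1 * (q * s - p * r)| := le_abs_self _
          _ = |w1| * |p * r - q * s| := by rw [abs_mul, abs_sub_comm]
          _ ≤ G * |p * r - q * s| := mul_le_mul_of_nonneg_right hw1le (abs_nonneg _)
      have e : G / q * |p * r - q * s| = G * |p * r - q * s| / q := by ring
      rw [e, le_div_iff₀ hqpos]; linarith [step]


theorem one_sub_psd {n : Type*} [Fintype n] [DecidableEq n] {M : Matrix n n ℂ} (hM : M.PosSemidef)
    (h : ‖Matrix.toEuclideanCLM (𝕜 := ℂ) M‖ ≤ 1) : (1 - M).PosSemidef := by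
  refine Matrix.PosSemidef.of_dotProduct_mulVec_nonneg ?_ ?_
  · exact Matrix.isHermitian_one.sub hM.1
  · intro x
    have hx : star x ⬝ᵥ (1 - M) *ᵥ x = star x ⬝ᵥ x - star x ⬝ᵥ M *ᵥ x := by
      rw [Matrix.sub_mulVec, dotProduct_sub, Matrix.one_mulVec]
    rw [hx]
    set u : EuclideanSpace ℂ n := (WithLp.equiv 2 _).symm x with hu
    have h1 : inner ℂ u ((Matrix.toEuclideanCLM (𝕜 := ℂ) M) u) = star x ⬝ᵥ M *ᵥ x := by
      rw [hu, WithLp.equiv_symm_apply, Matrix.toEuclideanCLM_toLp, EuclideanSpace.inner_toLp_toLp,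
        dotProduct_comm]
    have h2 : (inner ℂ u u : ℂ) = star x ⬝ᵥ x := by
      rw [hu, WithLp.equiv_symm_apply, EuclideanSpace.inner_toLp_toLp, dotProduct_comm]
    rw [← h1, ← h2]
    have hnn : (0:ℂ) ≤ inner ℂ u (Matrix.toEuclideanCLM (𝕜 := ℂ) M u) := by
      rw [h1]; exact hM.dotProduct_mulVec_nonneg x
    have he : (inner ℂ u u : ℂ) = ((‖u‖ ^ 2 : ℝ) : ℂ) := by
      rw [inner_self_eq_norm_sq_to_K]; norm_cast
    have hre : (inner ℂ u (Matrix.toEuclideanCLM (𝕜 := ℂ) M u) : ℂ).re ≤ (inner ℂ u u : ℂ).re := by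
      have hb : (inner ℂ u (Matrix.toEuclideanCLM (𝕜 := ℂ) M u) : ℂ).re
          ≤ ‖(inner ℂ u (Matrix.toEuclideanCLM (𝕜 := ℂ) M u) : ℂ)‖ := Complex.re_le_norm _
      have hc : ‖(inner ℂ u (Matrix.toEuclideanCLM (𝕜 := ℂ) M u) : ℂ)‖
          ≤ ‖u‖ * ‖Matrix.toEuclideanCLM (𝕜 := ℂ) M u‖ := norm_inner_le_norm _ _
      have hd : ‖Matrix.toEuclideanCLM (𝕜 := ℂ) M u‖ ≤ 1 * ‖u‖ := by
        calc ‖Matrix.toEuclideanCLM (𝕜 := ℂ) M u‖ ≤ ‖Matrix.toEuclideanCLM (𝕜 := ℂ) M‖ * ‖u‖ :=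
              (Matrix.toEuclideanCLM (𝕜 := ℂ) M).le_opNorm u
          _ ≤ 1 * ‖u‖ := by gcongr
      have he' : (inner ℂ u u : ℂ).re = ‖u‖ ^ 2 := by rw [he, Complex.ofReal_re]
      nlinarith [norm_nonneg u]
    have him : (inner ℂ u u : ℂ).im = 0 := by rw [he, Complex.ofReal_im]
    rw [Complex.le_def] at hnn ⊢
    refine ⟨by simp only [Complex.sub_re, Complex.zero_re]; linarith, ?_⟩
    simp only [Complex.sub_im, Complex.zero_im, him] at hnn ⊢
    linarith


lemma psd_facts {M : Matrix (Fin 2) (Fin 2) ℂ} (hM : M.PosSemidef) :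
    M 0 0 = ((M 0 0).re : ℂ) ∧ M 1 1 = ((M 1 1).re : ℂ) ∧
    M 1 0 = (starRingEnd ℂ) (M 0 1) ∧ 0 ≤ (M 0 0).re ∧ 0 ≤ (M 1 1).re ∧
    (M 0 1).re ^ 2 + (M 0 1).im ^ 2 ≤ (M 0 0).re * (M 1 1).re := by
  have h00 : (0:ℂ) ≤ M 0 0 := by
    simpa [dotProduct, Matrix.mulVec, Fin.sum_univ_two, Pi.single] using
      hM.dotProduct_mulVec_nonneg (Pi.single 0 1)
  have h11 : (0:ℂ) ≤ M 1 1 := by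
    simpa [dotProduct, Matrix.mulVec, Fin.sum_univ_two, Pi.single] using
      hM.dotProduct_mulVec_nonneg (Pi.single 1 1)
  rw [Complex.nonneg_iff] at h00 h11
  have e00 : M 0 0 = ((M 0 0).re : ℂ) := by
    apply Complex.ext <;> simp [h00.2.symm]
  have e11 : M 1 1 = ((M 1 1).re : ℂ) := by
    apply Complex.ext <;> simp [h11.2.symm]
  have herm : M 1 0 = (starRingEnd ℂ) (M 0 1) := by
    have h := hM.1
    rw [Matrix.IsHermitian] at h
    conv_lhs => rw [← h]
    simp [Matrix.conjTranspose_apply]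
  have hdet : (0:ℂ) ≤ M.det := by
    rw [hM.1.det_eq_prod_eigenvalues]
    refine Finset.prod_nonneg fun i _ => ?_
    rw [Complex.le_def]
    simpa using hM.eigenvalues_nonneg i
  rw [Matrix.det_fin_two, herm, Complex.mul_conj, e00, e11, Complex.nonneg_iff] at hdet
  have hd := hdet.1
  simp [Complex.normSq_apply] at hd
  refine ⟨e00, e11, herm, h00.1, h11.1, by nlinarith [hd]⟩


set_option maxHeartbeats 1000000 in
/-- If the 2×2 matrix `[[a, z],[0, b]]` (with `z ≥ 0`) equals `A·B` for
positive semidefinite 2×2 complex matrices `A, B` with operator norms at most 1, then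
`a, b ∈ [0,1]` and `z ≤ |√a − √b|·√((1−a)(1−b))`. -/
theorem matrix_product_of_two_positive_contractions_necessity (a b z : ℝ) (hz : 0 ≤ z)
    (A B : Matrix (Fin 2) (Fin 2) ℂ)
    (hA : A.PosSemidef) (hAnorm : ‖Matrix.toEuclideanCLM (𝕜 := ℂ) A‖ ≤ 1)
    (hB : B.PosSemidef) (hBnorm : ‖Matrix.toEuclideanCLM (𝕜 := ℂ) B‖ ≤ 1)
    (hAB : A * B = !![(a : ℂ), (z : ℂ); 0, (b : ℂ)]) :
    a ∈ Set.Icc (0 : ℝ) 1 ∧ b ∈ Set.Icc (0 : ℝ) 1 ∧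
      z ≤ |Real.sqrt a - Real.sqrt b| * Real.sqrt ((1 - a) * (1 - b)) := by
  obtain ⟨eA00, eA11, eA10, hp0, hq0, hdetA⟩ := psd_facts hA
  obtain ⟨eB00, eB11, eB10, hr0, hs0, hdetB⟩ := psd_facts hB
  obtain ⟨eA00', eA11', _, hp1', hq1', hdetA'⟩ := psd_facts (one_sub_psd hA hAnorm)
  obtain ⟨eB00', eB11', _, hr1', hs1', hdetB'⟩ := psd_facts (one_sub_psd hB hBnorm)
  have kA00 : (1 - A) 0 0 = 1 - A 0 0 := by simp [Matrix.sub_apply]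
  have kA11 : (1 - A) 1 1 = 1 - A 1 1 := by simp [Matrix.sub_apply]
  have kA01 : (1 - A) 0 1 = - A 0 1 := by simp [Matrix.sub_apply, Matrix.one_apply]
  have kB00 : (1 - B) 0 0 = 1 - B 0 0 := by simp [Matrix.sub_apply]
  have kB11 : (1 - B) 1 1 = 1 - B 1 1 := by simp [Matrix.sub_apply]
  have kB01 : (1 - B) 0 1 = - B 0 1 := by simp [Matrix.sub_apply, Matrix.one_apply]
  rw [kA00] at hp1'
  rw [kA11] at hq1'
  rw [kB00] at hr1'
  rw [kB11] at hs1'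
  rw [kA00, kA11, kA01] at hdetA'
  rw [kB00, kB11, kB01] at hdetB'
  simp [Complex.sub_re, Complex.one_re, Complex.neg_re, Complex.neg_im] at hp1' hq1' hr1' hs1' hdetA' hdetB'
  have E00 := congrFun (congrFun hAB 0) 0
  have E01 := congrFun (congrFun hAB 0) 1
  have E10 := congrFun (congrFun hAB 1) 0
  have E11 := congrFun (congrFun hAB 1) 1
  simp [Matrix.mul_apply, Fin.sum_univ_two] at E00 E01 E10 E11
  rw [eA00, eB00, eB10] at E00
  rw [eA00, eB11] at E01
  rw [eA10, eA11, eB00, eB10] at E10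
  rw [eA10, eA11, eB11] at E11
  have e00r := congrArg Complex.re E00
  have e01r := congrArg Complex.re E01
  have e10r := congrArg Complex.re E10
  have e10i := congrArg Complex.im E10
  have e11r := congrArg Complex.re E11
  simp [Complex.add_re, Complex.add_im, Complex.mul_re, Complex.mul_im] at e00r e01r e10r e10i e11r
  obtain ⟨g, hg0, h1, h2, h3, h4, haeq, hbeq, hzb⟩ :=
    reduce (p := (A 0 0).re) (q := (A 1 1).re) (r := (B 0 0).re) (s := (B 1 1).re)
      (w1 := (A 0 1).re) (w2 := (A 0 1).im) (v1 := (B 0 1).re) (v2 := (B 0 1).im)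
      (a := a) (b := b) (z := z)
      hp0 hq0 hr0 hs0 (by linarith) (by linarith) (by linarith) (by linarith)
      (by nlinarith [hdetA]) (by nlinarith [hdetA']) (by nlinarith [hdetB])
      (by nlinarith [hdetB']) (by linarith [e00r]) (by linarith [e01r]) (by linarith [e10r])
      (by linarith [e10i]) (by linarith [e11r]) hz
  obtain ⟨⟨ha0, ha1⟩, ⟨hb0, hb1⟩, hfin⟩ :=
    real_key hp0 (by linarith) hq0 (by linarith) hr0 (by linarith) hs0 (by linarith)
      hg0 h1 h2 h3 h4 hz hzb
  rw [haeq, hbeq]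
  exact ⟨Set.mem_Icc.mpr ⟨ha0, ha1⟩, Set.mem_Icc.mpr ⟨hb0, hb1⟩, hfin⟩
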